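/- Let d ≥ 2, r ≥ 0, λ ≥ 0 and t > 0. Then σ_{d−1}(Q_{λ,t}(r)) ≤ σ_{d−1}({x ∈ ℝ^d : |x| = t}) = t^{d−1}·σ_{d−1}(S^{d−1}), where S^{d−1} is the unit sphere of ℝ^d. In particular σ_{d−1}(Q_{λ,t}(r)) ≤ c·t^{d−1} with a constant c depending only on d. -/

import Mathlib

open MeasureTheory Set
open scoped ENNReal NNReal
open scoped Pointwise

noncomputable section

abbrev E (d : ℕ) := EuclideanSpace ℝ (Fin d)

def e1 (d : ℕ) : E d := (EuclideanSpace.equiv (Fin d) ℝ).symm (fun i => if (i : ℕ) = 0 then 1 else 0)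

/-- `Q_{λ,t}(r) = {w ∈ ℝ^d : |w| = λ, |w - re₁| ≤ t}` -/
def Q (d : ℕ) (l t r : ℝ) : Set (E d) := {w | ‖w‖ = l ∧ ‖w - r • e1 d‖ ≤ t}

section BallProj
variable {F : Type*} [NormedAddCommGroup F] [InnerProductSpace ℝ F]

/-- Nearest-point projection onto the closed ball of radius `l` around `0`. -/
def ballProj (l : ℝ) (x : F) : F := if ‖x‖ ≤ l then x else (l / ‖x‖) • x

lemma norm_le_of_sq_le {u v : F} (h : ‖u‖ ^ 2 ≤ ‖v‖ ^ 2) : ‖u‖ ≤ ‖v‖ := by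
  nlinarith [norm_nonneg u, norm_nonneg v]

lemma sq_expand (a b : ℝ) (x y : F) :
    ‖a • x - b • y‖ ^ 2
      = a ^ 2 * ‖x‖ ^ 2 - 2 * (a * b) * (inner ℝ x y : ℝ) + b ^ 2 * ‖y‖ ^ 2 := by
  simp only [norm_sub_sq_real, real_inner_smul_left, real_inner_smul_right, norm_smul,
    mul_pow, Real.norm_eq_abs, sq_abs]
  ring

lemma norm_ballProj_sub_le (l : ℝ) (hl : 0 ≤ l) (x y : F) :
    ‖ballProj l x - ballProj l y‖ ≤ ‖x - y‖ := by
  wlog h : ‖y‖ ≤ ‖x‖ generalizing x y with H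
  · rw [norm_sub_rev, norm_sub_rev x]
    exact H y x (le_of_not_ge h)
  have hip : (inner ℝ x y : ℝ) ≤ ‖x‖ * ‖y‖ := real_inner_le_norm x y
  rcases le_or_gt ‖x‖ l with hx | hx
  · have hy : ‖y‖ ≤ l := h.trans hx
    simp [ballProj, hx, hy]
  have hX : (0:ℝ) < ‖x‖ := lt_of_le_of_lt hl hx
  rcases le_or_gt ‖y‖ l with hy | hy
  · -- x outside, y inside
    have e1 : ballProj l x = (l / ‖x‖) • x := if_neg (not_le.2 hx)
    have e2 : ballProj l y = y := if_pos hy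
    rw [e1, e2]
    apply norm_le_of_sq_le
    have h1 := sq_expand (l / ‖x‖) 1 x y
    have h2 := sq_expand 1 1 x y
    rw [one_smul] at h1
    rw [one_smul, one_smul] at h2
    have haX : l / ‖x‖ * ‖x‖ = l := div_mul_cancel₀ _ hX.ne'
    have ha1 : l / ‖x‖ ≤ 1 := (div_le_one hX).2 hx.le
    have ha0 : 0 ≤ l / ‖x‖ := div_nonneg hl hX.le
    nlinarith [mul_nonneg (mul_nonneg (sub_nonneg.2 ha1) hX.le)
        (by linarith [hy, h, hx.le] : ‖x‖ + l - 2 * ‖y‖ ≥ 0),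
      mul_nonneg (sub_nonneg.2 ha1) (sub_nonneg.2 hip), norm_nonneg y]
  · -- both outside
    have hY : (0:ℝ) < ‖y‖ := lt_of_le_of_lt hl hy
    have e1 : ballProj l x = (l / ‖x‖) • x := if_neg (not_le.2 hx)
    have e2 : ballProj l y = (l / ‖y‖) • y := if_neg (not_le.2 hy)
    rw [e1, e2]
    apply norm_le_of_sq_le
    have h1 := sq_expand (l / ‖x‖) (l / ‖y‖) x y
    have h2 := sq_expand 1 1 x y
    rw [one_smul, one_smul] at h2
    have haX : l / ‖x‖ * ‖x‖ = l := div_mul_cancel₀ _ hX.ne'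
    have hbY : l / ‖y‖ * ‖y‖ = l := div_mul_cancel₀ _ hY.ne'
    have ha1 : l / ‖x‖ ≤ 1 := (div_le_one hX).2 hx.le
    have hb1 : l / ‖y‖ ≤ 1 := (div_le_one hY).2 hy.le
    have ha0 : 0 ≤ l / ‖x‖ := div_nonneg hl hX.le
    have hb0 : 0 ≤ l / ‖y‖ := div_nonneg hl hY.le
    nlinarith [mul_nonneg (sub_nonneg.2 (mul_le_one₀ ha1 hb0 hb1)) (sub_nonneg.2 hip),
      sq_nonneg (‖x‖ - ‖y‖)]

lemma ballProj_lipschitz (l : ℝ) (hl : 0 ≤ l) : LipschitzWith 1 (ballProj (F := F) l) :=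
  LipschitzWith.of_dist_le_mul fun x y => by
    simpa [dist_eq_norm] using norm_ballProj_sub_le l hl x y

end BallProj

lemma e1_apply (d : ℕ) (i : Fin d) : e1 d i = if (i : ℕ) = 0 then 1 else 0 := rfl

lemma e1_norm (d : ℕ) (hd : 0 < d) : ‖e1 d‖ = 1 := by
  rw [EuclideanSpace.norm_eq]
  have h : ∑ i : Fin d, ‖e1 d i‖ ^ 2 = 1 := by
    rw [Fintype.sum_eq_single (⟨0, hd⟩ : Fin d)]
    · simp [e1_apply]
    · intro j hj
      have hj' : (j : ℕ) ≠ 0 := by simpa [Fin.ext_iff] using hj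
      simp [e1_apply, hj']
  rw [h, Real.sqrt_one]

lemma Q_subset_proj (d : ℕ) (hd : 0 < d) (r l t : ℝ) (hr : 0 ≤ r) (hl : 0 ≤ l) (ht : 0 < t) :
    Q d l t r ⊆ ballProj l '' {z : E d | ‖z - r • e1 d‖ = t} := by
  intro q hq
  obtain ⟨hq1, hq2⟩ := hq
  set p : E d := r • e1 d with hp
  have hpnorm : ‖p‖ = r := by
    rw [hp, norm_smul, Real.norm_eq_abs, abs_of_nonneg hr, e1_norm d hd, mul_one]
  rcases eq_or_lt_of_le hq2 with heq | hlt
  · exact ⟨q, heq, by rw [ballProj, if_pos hq1.le]⟩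
  rcases eq_or_lt_of_le hl with hl0 | hl0
  · -- l = 0, so q = 0
    have hq0 : q = 0 := by rw [← norm_eq_zero, hq1, ← hl0]
    refine ⟨p + t • e1 d, ?_, ?_⟩
    · show ‖p + t • e1 d - p‖ = t
      rw [add_sub_cancel_left, norm_smul, Real.norm_eq_abs, abs_of_pos ht, e1_norm d hd, mul_one]
    · rw [hq0, ballProj]
      split_ifs with h
      · have h0 : ‖p + t • e1 d‖ = 0 :=
          le_antisymm (by rw [← hl0] at h; exact h) (norm_nonneg _)
        rwa [norm_eq_zero] at h0
      · rw [← hl0]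
        simp
  · -- l > 0
    set M : ℝ := (t + r + l) / l with hM
    have hM1 : 1 ≤ M := by rw [hM, le_div_iff₀ hl0]; linarith
    have hcont : ContinuousOn (fun c : ℝ => ‖c • q - p‖) (Icc 1 M) := by fun_prop
    have hfM : t ≤ ‖M • q - p‖ := by
      have h1 : ‖M • q‖ - ‖p‖ ≤ ‖M • q - p‖ := norm_sub_norm_le _ _
      have h2 : ‖M • q‖ = M * l := by
        rw [norm_smul, Real.norm_eq_abs, abs_of_pos (by linarith : (0:ℝ) < M), hq1]
      have h3 : M * l = t + r + l := by rw [hM]; field_simp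
      rw [h2, h3, hpnorm] at h1; linarith
    obtain ⟨c, hc, hct⟩ := intermediate_value_Icc hM1 hcont ⟨by simpa using hq2, hfM⟩
    have hc1 : 1 ≤ c := hc.1
    have hcpos : 0 < c := lt_of_lt_of_le one_pos hc1
    refine ⟨c • q, hct, ?_⟩
    have hnz : ‖c • q‖ = c * l := by rw [norm_smul, Real.norm_eq_abs, abs_of_pos hcpos, hq1]
    rw [ballProj]
    split_ifs with h
    · have hcle : c ≤ 1 := by rw [hnz] at h; nlinarith
      rw [le_antisymm hcle hc1, one_smul]
    · rw [hnz, smul_smul]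
      have hone : l / (c * l) * c = 1 := by
        field_simp
      rw [hone, one_smul]

lemma sphere_finite (d : ℕ) (hd : 2 ≤ d) : μH[(d:ℝ)-1] {x : E d | ‖x‖ = 1} < ⊤ := by
  obtain ⟨m, rfl⟩ : ∃ m, d = m + 1 := ⟨d - 1, by omega⟩
  have hm : 1 ≤ m := by omega
  have hsm : ((m + 1 : ℕ) : ℝ) - 1 = (m : ℝ) := by push_cast; ring
  rw [hsm]
  have hs0 : (0:ℝ) ≤ (m : ℝ) := Nat.cast_nonneg m
  set K : Set (Fin m → ℝ) := Metric.closedBall 0 1 with hK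
  set G : Fin (m + 1) → Bool → (Fin m → ℝ) → E (m + 1) := fun i b u =>
    (EuclideanSpace.equiv (Fin (m + 1)) ℝ).symm
      (Fin.insertNth i (if b then 1 else -1) u) with hG
  have happ : ∀ (f : Fin (m + 1) → ℝ) (j : Fin (m + 1)),
      ((EuclideanSpace.equiv (Fin (m + 1)) ℝ).symm f) j = f j := fun f j => rfl
  -- Lipschitz bound on the face maps
  have hGlip : ∀ i b, LipschitzWith (m : ℝ≥0) (G i b) := by
    intro i b
    apply LipschitzWith.of_dist_le_mul
    intro u v
    rw [dist_eq_norm, dist_eq_norm]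
    set w : Fin m → ℝ := u - v with hw
    have hdiff : G i b u - G i b v =
        (EuclideanSpace.equiv (Fin (m + 1)) ℝ).symm (Fin.insertNth i 0 w) := by
      rw [hG]
      dsimp only
      rw [← map_sub]
      congr 1
      funext j
      refine Fin.succAboveCases i ?_ ?_ j
      · simp
      · intro k
        simp [Fin.insertNth_apply_succAbove, hw]
    rw [hdiff]
    set z : Fin (m + 1) → ℝ := Fin.insertNth i (0:ℝ) w with hz
    have hnorm : ‖(EuclideanSpace.equiv (Fin (m + 1)) ℝ).symm z‖
        = Real.sqrt (∑ j : Fin (m + 1), z j ^ 2) := by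
      rw [EuclideanSpace.norm_eq]
      congr 1
      refine Finset.sum_congr rfl fun j _ => ?_
      rw [happ, Real.norm_eq_abs, sq_abs]
    rw [hnorm]
    have hsum : ∑ j : Fin (m + 1), z j ^ 2 = ∑ k : Fin m, (w k) ^ 2 := by
      rw [Fin.sum_univ_succAbove (fun j => z j ^ 2) i, hz]
      simp [Fin.insertNth_apply_same, Fin.insertNth_apply_succAbove]
    rw [hsum]
    have hterm : ∀ k : Fin m, (w k) ^ 2 ≤ ‖w‖ ^ 2 := by
      intro k
      have := norm_le_pi_norm w k
      have h0 : |w k| ≤ ‖w‖ := by rwa [← Real.norm_eq_abs]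
      calc (w k) ^ 2 = |w k| ^ 2 := (sq_abs _).symm
        _ ≤ ‖w‖ ^ 2 := pow_le_pow_left₀ (abs_nonneg _) h0 2
    have hsum2 : ∑ k : Fin m, (w k) ^ 2 ≤ (m : ℝ) * ‖w‖ ^ 2 := by
      calc ∑ k : Fin m, (w k) ^ 2 ≤ ∑ _k : Fin m, ‖w‖ ^ 2 := Finset.sum_le_sum fun k _ => hterm k
        _ = (m : ℝ) * ‖w‖ ^ 2 := by simp [Finset.sum_const, mul_comm]
    have hm1 : (1:ℝ) ≤ (m:ℝ) := by exact_mod_cast hm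
    calc Real.sqrt (∑ k : Fin m, (w k) ^ 2)
        ≤ Real.sqrt (((m : ℝ) * ‖w‖) ^ 2) := by
          apply Real.sqrt_le_sqrt
          nlinarith [norm_nonneg w]
      _ = (m : ℝ) * ‖w‖ := Real.sqrt_sq (by positivity)
      _ = ((m : ℝ≥0) : ℝ) * ‖u - v‖ := by rw [hw]; push_cast; ring
  -- the cover
  have hcover : {x : E (m + 1) | ‖x‖ = 1} ⊆
      ⋃ σ : Fin (m + 1) × Bool, ballProj 1 '' (G σ.1 σ.2 '' K) := by
    intro x hx
    simp only [mem_setOf_eq] at hx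
    obtain ⟨i, -, hi⟩ := Finset.exists_max_image Finset.univ (fun j => |x j|)
      ⟨0, Finset.mem_univ 0⟩
    have hi' : ∀ j, |x j| ≤ |x i| := fun j => hi j (Finset.mem_univ j)
    have hipos : 0 < |x i| := by
      rcases lt_or_ge 0 |x i| with h | h
      · exact h
      · exfalso
        have hall : ∀ j, x j = 0 := fun j =>
          abs_eq_zero.1 (le_antisymm (le_trans (hi' j) h) (abs_nonneg _))
        have h0 : ‖x‖ = 0 := by
          rw [EuclideanSpace.norm_eq]
          simp [hall]
        rw [hx] at h0; norm_num at h0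
    have hile : |x i| ≤ 1 := by
      have h1 : |x i| ≤ ‖x‖ := by
        rw [EuclideanSpace.norm_eq]
        have : |x i| = Real.sqrt ((x i) ^ 2) := by rw [Real.sqrt_sq_eq_abs]
        rw [this]
        apply Real.sqrt_le_sqrt
        refine Finset.single_le_sum (f := fun j => ‖x j‖ ^ 2) (fun j _ => by positivity)
          (Finset.mem_univ i) |>.trans_eq' ?_
        rw [Real.norm_eq_abs, sq_abs]
      rwa [hx] at h1
    set y : E (m + 1) := |x i|⁻¹ • x with hy
    have hyj : ∀ j, y j = |x i|⁻¹ * x j := fun j => rfl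
    set b : Bool := decide (0 < x i) with hb
    have hxine : x i ≠ 0 := fun h => by rw [h] at hipos; simp at hipos
    have hyi : y i = if b then 1 else -1 := by
      rw [hyj, hb]
      rcases lt_trichotomy (x i) 0 with h | h | h
      · rw [abs_of_neg h]
        simp [not_lt.2 h.le, h.not_gt]
        field_simp
      · exact absurd h hxine
      · rw [abs_of_pos h]
        simp [h]
        field_simp
    set u : Fin m → ℝ := fun k => y (i.succAbove k) with hu
    have huK : u ∈ K := by
      rw [hK, Metric.mem_closedBall, dist_zero_right]
      refine (pi_norm_le_iff_of_nonneg zero_le_one).2 fun k => ?_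
      rw [hu]
      dsimp only
      rw [hyj, Real.norm_eq_abs, abs_mul, abs_inv, abs_abs]
      calc |x i|⁻¹ * |x (i.succAbove k)| ≤ |x i|⁻¹ * |x i| :=
            mul_le_mul_of_nonneg_left (hi' _) (by positivity)
        _ = 1 := inv_mul_cancel₀ hipos.ne'
    have hGy : G i b u = y := by
      rw [hG]
      dsimp only
      have : Fin.insertNth i (if b then (1:ℝ) else -1) u = fun j => y j := by
        funext j
        refine Fin.succAboveCases i ?_ ?_ j
        · rw [Fin.insertNth_apply_same, hyi]
        · intro k
          rw [Fin.insertNth_apply_succAbove]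
      rw [this]
      rfl
    have hynorm : ‖y‖ = |x i|⁻¹ := by
      rw [hy, norm_smul, Real.norm_eq_abs, abs_inv, abs_abs, hx, mul_one]
    have hproj : ballProj 1 y = x := by
      rw [ballProj]
      split_ifs with h
      · have h1 : (1:ℝ) ≤ ‖y‖ := by
          rw [hynorm]
          have hinv : |x i| * |x i|⁻¹ = 1 := mul_inv_cancel₀ hipos.ne'
          nlinarith [inv_pos.2 hipos]
        have h2 : ‖y‖ = 1 := le_antisymm h h1
        rw [hynorm] at h2
        have hxi1 : |x i| = 1 := inv_eq_one.1 h2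
        rw [hy, hxi1, inv_one, one_smul]
      · rw [hynorm, hy, smul_smul]
        have : 1 / |x i|⁻¹ * |x i|⁻¹ = 1 := by field_simp
        rw [this, one_smul]
    refine mem_iUnion.2 ⟨(i, b), ?_⟩
    exact ⟨G i b u, ⟨u, huK, rfl⟩, by rw [hGy, hproj]⟩
  -- measure bound
  set C : ℝ≥0∞ := ((m : ℝ≥0) : ℝ≥0∞) ^ (m : ℝ) * volume K with hC
  have hKfin : volume K < ⊤ := (isCompact_closedBall 0 1).measure_lt_top
  have hCfin : C < ⊤ := by
    rw [hC]
    exact ENNReal.mul_lt_top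
      (ENNReal.rpow_lt_top_of_nonneg hs0 (by simp)) hKfin
  have hμK : μH[(m : ℝ)] K = volume K := by
    have h := hausdorffMeasure_pi_real (ι := Fin m)
    simp only [Fintype.card_fin] at h
    rw [h]
  have hbound : ∀ σ : Fin (m + 1) × Bool, μH[(m:ℝ)] (ballProj 1 '' (G σ.1 σ.2 '' K)) ≤ C := by
    intro σ
    calc μH[(m:ℝ)] (ballProj 1 '' (G σ.1 σ.2 '' K))
        ≤ (1 : ℝ≥0∞) ^ (m:ℝ) * μH[(m:ℝ)] (G σ.1 σ.2 '' K) :=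
          (ballProj_lipschitz 1 zero_le_one).hausdorffMeasure_image_le hs0 _
      _ = μH[(m:ℝ)] (G σ.1 σ.2 '' K) := by rw [ENNReal.one_rpow, one_mul]
      _ ≤ ((m : ℝ≥0) : ℝ≥0∞) ^ (m:ℝ) * μH[(m:ℝ)] K :=
          (hGlip σ.1 σ.2).hausdorffMeasure_image_le hs0 _
      _ = C := by rw [hμK, hC]
  calc μH[(m:ℝ)] {x : E (m+1) | ‖x‖ = 1}
      ≤ μH[(m:ℝ)] (⋃ σ : Fin (m + 1) × Bool, ballProj 1 '' (G σ.1 σ.2 '' K)) :=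
        measure_mono hcover
    _ ≤ ∑' σ : Fin (m + 1) × Bool, μH[(m:ℝ)] (ballProj 1 '' (G σ.1 σ.2 '' K)) :=
        measure_iUnion_le _
    _ ≤ ∑' _σ : Fin (m + 1) × Bool, C := ENNReal.tsum_le_tsum hbound
    _ < ⊤ := by
        rw [tsum_fintype]
        exact ENNReal.sum_lt_top.2 fun _ _ => hCfin

/-- `σ_{d-1}(Q_{λ,t}(r)) ≤ σ_{d-1}({|x|=t}) = t^{d-1}·σ_{d-1}(S^{d-1})`;
in particular `σ_{d-1}(Q_{λ,t}(r)) ≤ c·t^{d-1}` with `c` depending only on `d`. -/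
theorem hausdorff_measure_Q_le (d : ℕ) (hd : 2 ≤ d) :
    (∀ r l t : ℝ, 0 ≤ r → 0 ≤ l → 0 < t →
      μH[(d : ℝ) - 1] (Q d l t r) ≤ μH[(d : ℝ) - 1] {x : E d | ‖x‖ = t} ∧
      μH[(d : ℝ) - 1] {x : E d | ‖x‖ = t} =
        ENNReal.ofReal (t ^ (d - 1)) * μH[(d : ℝ) - 1] {x : E d | ‖x‖ = 1}) ∧
    ∃ c : ℝ≥0∞, c < ∞ ∧ ∀ r l t : ℝ, 0 ≤ r → 0 ≤ l → 0 < t →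
      μH[(d : ℝ) - 1] (Q d l t r) ≤ c * ENNReal.ofReal (t ^ (d - 1)) := by
  have hd0 : 0 < d := by omega
  have hs0 : (0:ℝ) ≤ (d:ℝ) - 1 := by
    have h2 : (2:ℝ) ≤ (d:ℝ) := by exact_mod_cast hd
    linarith
  have key1 : ∀ r l t : ℝ, 0 ≤ r → 0 ≤ l → 0 < t →
      μH[(d:ℝ)-1] (Q d l t r) ≤ μH[(d:ℝ)-1] {x : E d | ‖x‖ = t} := by
    intro r l t hr hl ht
    have himg : {z : E d | ‖z - r • e1 d‖ = t}
        = (IsometryEquiv.addRight (r • e1 d)) '' {x : E d | ‖x‖ = t} := by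
      ext z
      simp only [mem_setOf_eq, Set.mem_image, IsometryEquiv.addRight_apply]
      constructor
      · intro hz
        exact ⟨z - r • e1 d, hz, by abel⟩
      · rintro ⟨x, hx, rfl⟩
        simpa using hx
    calc μH[(d:ℝ)-1] (Q d l t r)
        ≤ μH[(d:ℝ)-1] (ballProj l '' {z : E d | ‖z - r • e1 d‖ = t}) :=
          measure_mono (Q_subset_proj d hd0 r l t hr hl ht)
      _ ≤ (1 : ℝ≥0∞) ^ ((d:ℝ)-1) * μH[(d:ℝ)-1] {z : E d | ‖z - r • e1 d‖ = t} :=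
          (ballProj_lipschitz l hl).hausdorffMeasure_image_le hs0 _
      _ = μH[(d:ℝ)-1] {z : E d | ‖z - r • e1 d‖ = t} := by
          rw [ENNReal.one_rpow, one_mul]
      _ = μH[(d:ℝ)-1] {x : E d | ‖x‖ = t} := by
          rw [himg, IsometryEquiv.hausdorffMeasure_image]
  have key2 : ∀ t : ℝ, 0 < t →
      μH[(d:ℝ)-1] {x : E d | ‖x‖ = t}
        = ENNReal.ofReal (t ^ (d - 1)) * μH[(d:ℝ)-1] {x : E d | ‖x‖ = 1} := by
    intro t ht
    have hset : {x : E d | ‖x‖ = t} = t • {x : E d | ‖x‖ = 1} := by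
      ext x
      simp only [mem_setOf_eq, mem_smul_set]
      constructor
      · intro hx
        refine ⟨t⁻¹ • x, ?_, ?_⟩
        · rw [norm_smul, Real.norm_eq_abs, abs_of_pos (inv_pos.2 ht), hx,
            inv_mul_cancel₀ ht.ne']
        · rw [smul_inv_smul₀ ht.ne']
      · rintro ⟨y, hy, rfl⟩
        rw [norm_smul, Real.norm_eq_abs, abs_of_pos ht, hy, mul_one]
    rw [hset, Measure.hausdorffMeasure_smul₀ hs0 ht.ne' _, ENNReal.smul_def, smul_eq_mul]
    congr 1
    calc ((‖t‖₊ ^ ((d:ℝ)-1) : ℝ≥0) : ℝ≥0∞)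
        = ((‖t‖₊ : ℝ≥0∞)) ^ ((d:ℝ)-1) := ENNReal.coe_rpow_of_nonneg _ hs0
      _ = ENNReal.ofReal t ^ ((d:ℝ)-1) := by
          congr 1
          rw [Real.nnnorm_of_nonneg ht.le, ENNReal.ofReal]
          congr 1
          exact (Real.toNNReal_of_nonneg ht.le).symm
      _ = ENNReal.ofReal (t ^ ((d:ℝ)-1)) := ENNReal.ofReal_rpow_of_pos ht
      _ = ENNReal.ofReal (t ^ (d - 1)) := by
          rw [← Real.rpow_natCast t (d-1), Nat.cast_sub (by omega : 1 ≤ d), Nat.cast_one]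
  refine ⟨fun r l t hr hl ht => ⟨key1 r l t hr hl ht, key2 t ht⟩,
    ⟨μH[(d:ℝ)-1] {x : E d | ‖x‖ = 1}, sphere_finite d hd, fun r l t hr hl ht => ?_⟩⟩
  calc μH[(d:ℝ)-1] (Q d l t r)
      ≤ μH[(d:ℝ)-1] {x : E d | ‖x‖ = t} := key1 r l t hr hl ht
    _ = ENNReal.ofReal (t ^ (d-1)) * μH[(d:ℝ)-1] {x : E d | ‖x‖ = 1} := key2 t ht
    _ = μH[(d:ℝ)-1] {x : E d | ‖x‖ = 1} * ENNReal.ofReal (t ^ (d-1)) := mul_comm _ _
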